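/- If M is a simple matroid with no U_{2,ℓ+2}-minor (where ℓ ≥ 2), then the number of elements of M is at most (ℓ^{r(M)} − 1)/(ℓ − 1). -/

import Mathlib

open Set Matroid
open scoped Matroid

namespace MatroidDHJ

variable {α β : Type*}

/-- The rank of a set in a matroid, as an extended natural number. -/
noncomputable def er (M : Matroid α) (X : Set α) : ℕ∞ :=
  ⨆ I : {I : Set α // M.Indep I ∧ I ⊆ X}, (I : Set α).encard

/-- The rank of a set, as a natural number. -/
noncomputable def r (M : Matroid α) (X : Set α) : ℕ := (er M X).toNat

/-- The rank of a matroid. -/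
noncomputable def rk (M : Matroid α) : ℕ := r M M.E

/-- Deletion of a set from a matroid. -/
def delete (M : Matroid α) (D : Set α) : Matroid α := M ↾ (M.E \ D)

/-- Contraction of a set in a matroid. -/
def contract (M : Matroid α) (C : Set α) : Matroid α := (delete M✶ C)✶

/-- `N` is a minor of `M` if it is obtained by a contraction followed by a deletion. -/
def IsMinor (N M : Matroid α) : Prop := ∃ C D, delete (contract M C) D = N

/-- A matroid is simple if every set of at most two elements of the ground set
is independent. -/
def Simple (M : Matroid α) : Prop := ∀ I ⊆ M.E, I.encard ≤ 2 → M.Indep I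

/-- `M` has a `U_{2,n}`-minor iff it has a minor that is a simple rank-2 matroid
on `n` elements. -/
def HasU2Minor (M : Matroid α) (n : ℕ) : Prop :=
  ∃ N, IsMinor N M ∧ Simple N ∧ er N N.E = 2 ∧ N.E.encard = n

/-- A point of a matroid is a rank-one flat. -/
def Point (M : Matroid α) (P : Set α) : Prop := M.IsFlat P ∧ er M P = 1

/-- `ε M` is the number of points of `M`. -/
noncomputable def eps (M : Matroid α) : ℕ := {P | Point M P}.ncard

/-- A representation of a matroid over a field `F`: an assignment of vectors to
the elements so that independence coincides with linear independence. -/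
def Rep (M : Matroid α) (F : Type) [Field F] : Prop :=
  ∃ (n : ℕ) (φ : α → (Fin n → F)),
    ∀ I ⊆ M.E, (M.Indep I ↔ LinearIndependent F fun x : I => φ x)

/-- Representability over the field with `q` elements (`q` a prime power). -/
def RepGF (M : Matroid α) (q : ℕ) : Prop :=
  ∃ (F : Type) (hF : Field F) (hfin : Fintype F),
    @Fintype.card F hfin = q ∧ @Rep _ M F hF

/-- `M` is (isomorphic to) the projective geometry `PG(n-1,q)`: a simple
`GF(q)`-representable matroid of rank `n` with `(q^n - 1)/(q - 1)` elements. -/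
def IsPG (M : Matroid α) (n q : ℕ) : Prop :=
  Simple M ∧ RepGF M q ∧ M.E.Finite ∧ rk M = n ∧ (q - 1) * M.E.ncard = q ^ n - 1

/-- A hyperplane of a matroid: a flat whose rank is one less than that of `M`. -/
def Hyperplane (M : Matroid α) (H : Set α) : Prop := M.IsFlat H ∧ r M H + 1 = rk M

/-- An isomorphism between matroids on different ground types. -/
def IsIsoTo (M : Matroid α) (N : Matroid β) : Prop :=
  ∃ e : M.E ≃ N.E, ∀ I : Set M.E,
    M.Indep ((↑) '' I) ↔ N.Indep ((↑) '' (e '' I))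

/-- `M` is (isomorphic to) the affine geometry `AG(n-1,q)`: the deletion of a
hyperplane from `PG(n-1,q)`. -/
def IsAG (M : Matroid α) (n q : ℕ) : Prop :=
  ∃ (P : Matroid ℕ) (H : Set ℕ), IsPG P n q ∧ Hyperplane P H ∧
    IsIsoTo (delete P H) M

/-- `F` is a witnessing family for `S` being a `(q,h,t)`-stack. -/
def StackWitness (S : Matroid α) (q h t : ℕ) (F : Fin h → Set α) : Prop :=
  (∀ i, F i ⊆ S.E) ∧ Pairwise (Function.onFun Disjoint F) ∧
    S.E ⊆ S.closure (⋃ i, F i) ∧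
    ∀ i : Fin h,
      er (contract S (⋃ j ∈ {j | j < i}, F j) ↾ F i) (F i) ≤ t ∧
      ¬ RepGF (contract S (⋃ j ∈ {j | j < i}, F j) ↾ F i) q

/-- `S` is a `(q,h,t)`-stack. -/
def IsStack (S : Matroid α) (q h t : ℕ) : Prop := ∃ F, StackWitness S q h t F

/-- A matroid is weakly round if no two sets of ranks at most `r(M)-1` and
`r(M)-2` respectively have union the ground set. -/
def WeaklyRound (M : Matroid α) : Prop :=
  ¬ ∃ A B : Set α, A ∪ B = M.E ∧ r M A + 1 ≤ rk M ∧ r M B + 2 ≤ rk M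


/-- `N` is a simplification of `M`: a restriction of `M` to a set of nonloops
containing exactly one element of each point of `M`. -/
def IsSimplification (N M : Matroid α) : Prop :=
  ∃ S ⊆ M.E, N = M ↾ S ∧ (∀ e ∈ S, er M {e} = 1) ∧
    ∀ P, Point M P → ∃! e, e ∈ S ∩ P

section Aux

variable {M N : Matroid α} {I J X Y C P Q T : Set α} {e b x y : α}

lemma encard_le_er (hI : M.Indep I) (hIX : I ⊆ X) : I.encard ≤ er M X :=
  le_iSup (fun J : {I : Set α // M.Indep I ∧ I ⊆ X} => (J : Set α).encard) ⟨I, hI, hIX⟩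

lemma er_le_iff {c : ℕ∞} : er M X ≤ c ↔ ∀ I, M.Indep I → I ⊆ X → I.encard ≤ c := by
  constructor
  · intro h I hI hIX
    exact (encard_le_er hI hIX).trans h
  · intro h
    exact iSup_le fun J => h J J.2.1 J.2.2

lemma er_le_encard : er M X ≤ X.encard :=
  er_le_iff.2 fun _ _ hIX => Set.encard_le_encard hIX

lemma er_mono (hXY : X ⊆ Y) : er M X ≤ er M Y :=
  er_le_iff.2 fun _ hI hIX => encard_le_er hI (hIX.trans hXY)

lemma _root_.Matroid.IsBasis.er_eq (hI : M.IsBasis I X) : er M X = I.encard := by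
  refine le_antisymm (er_le_iff.2 fun J hJ hJX => ?_) (encard_le_er hI.indep hI.subset)
  obtain ⟨J', hJ', hJJ'⟩ := hJ.subset_isBasis_of_subset hJX hI.subset_ground
  exact (Set.encard_le_encard hJJ').trans (hJ'.encard_eq_encard hI).le

lemma _root_.Matroid.Indep.er_eq (hI : M.Indep I) : er M I = I.encard :=
  le_antisymm er_le_encard (encard_le_er hI Subset.rfl)

lemma encard_le_er_of_subset_closure (hI : M.Indep I) (hX : X ⊆ M.E)
    (hIX : I ⊆ M.closure X) : I.encard ≤ er M X := by
  obtain ⟨J, hJ⟩ := M.exists_isBasis X hX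
  obtain ⟨I', hI', hII'⟩ := hI.subset_isBasis_of_subset hIX (M.closure_subset_ground X)
  calc I.encard ≤ I'.encard := Set.encard_le_encard hII'
    _ = J.encard := hI'.encard_eq_encard hJ.isBasis_closure_right
    _ = er M X := hJ.er_eq.symm

lemma er_closure_le (hX : X ⊆ M.E) : er M (M.closure X) ≤ er M X :=
  er_le_iff.2 fun _ hI hIX => encard_le_er_of_subset_closure hI hX hIX

lemma er_closure_eq (hX : X ⊆ M.E) : er M (M.closure X) = er M X :=
  le_antisymm (er_closure_le hX) (er_mono (M.subset_closure X hX))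

lemma exists_indep_singleton_of_one_le_er (h : 1 ≤ er M X) : ∃ e ∈ X, M.Indep {e} := by
  by_contra hcon
  push_neg at hcon
  have h0 : er M X ≤ 0 := by
    refine er_le_iff.2 fun I hI hIX => ?_
    simp only [nonpos_iff_eq_zero, Set.encard_eq_zero]
    by_contra hne
    obtain ⟨e, he⟩ := Set.nonempty_iff_ne_empty.2 hne
    exact hcon e (hIX he) (hI.subset (Set.singleton_subset_iff.2 he))
  simpa using h.trans h0

lemma er_insert_le : er M (insert e X) ≤ er M X + 1 := by
  refine er_le_iff.2 fun I hI hIX => ?_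
  have h1 : I \ {e} ⊆ X := by
    intro z hz
    rcases Set.mem_insert_iff.1 (hIX hz.1) with h | h
    · exact absurd (by simp [h]) hz.2
    · exact h
  have h2 : (I \ {e}).encard ≤ er M X := encard_le_er (hI.subset Set.diff_subset) h1
  have h3 : I.encard ≤ (I \ {e}).encard + 1 := by
    by_cases he : e ∈ I
    · rw [Set.encard_diff_singleton_add_one he]
    · rw [Set.diff_singleton_eq_self he]; exact le_self_add
  exact h3.trans (add_le_add_left h2 1)

lemma closure_flat' (M : Matroid α) (X : Set α) : M.IsFlat (M.closure X) := by
  rw [Matroid.closure_def, Set.sInter_eq_iInter]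
  have hne : Nonempty {F // F ∈ {F | M.IsFlat F ∧ X ∩ M.E ⊆ F}} :=
    ⟨⟨M.E, M.ground_isFlat, Set.inter_subset_right⟩⟩
  exact Matroid.IsFlat.iInter fun F => F.2.1

lemma contract_ground (M : Matroid α) (C : Set α) : (contract M C).E = M.E \ C := rfl

lemma contract_dual_eq (M : Matroid α) (C : Set α) : (contract M C)✶ = delete M✶ C := by
  rw [contract, Matroid.dual_dual]

lemma contract_contract (M : Matroid α) (C C' : Set α) :
    contract (contract M C) C' = contract M (C ∪ C') := by
  rw [contract, contract_dual_eq, contract]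
  congr 1
  show (M✶ ↾ (M✶.E \ C)) ↾ ((M✶ ↾ (M✶.E \ C)).E \ C') = M✶ ↾ (M✶.E \ (C ∪ C'))
  rw [Matroid.restrict_ground_eq, Matroid.restrict_restrict_eq _ Set.diff_subset,
    Set.diff_diff]

lemma contract_empty (M : Matroid α) : contract M ∅ = M := by
  rw [contract, delete, Set.diff_empty, Matroid.restrict_ground_eq_self, Matroid.dual_dual]

end Aux

section Aux2

variable {α : Type*} {M N : Matroid α} {I J X Y C P Q T : Set α} {e b x y : α}

lemma contract_indep_iff (hC : C ⊆ M.E) (hJ : M.IsBasis J C) :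
    (contract M C).Indep I ↔ I ⊆ M.E \ C ∧ M.Indep (I ∪ J) := by
  have hR : M.E \ C ⊆ M✶.E := by rw [Matroid.dual_ground]; exact Set.diff_subset
  have hbase : ∀ B : Set α, (delete M✶ C).IsBase B ↔ M✶.IsBasis B (M.E \ C) := by
    intro B
    rw [delete, Matroid.dual_ground, Matroid.isBase_restrict_iff']
    exact Matroid.isBasis'_iff_isBasis hR
  constructor
  · intro hI
    obtain ⟨hIR, B, hB, hIB⟩ := (Matroid.dual_indep_iff_exists' (M := delete M✶ C)).1 hI
    rw [hbase] at hB
    have hIR' : I ⊆ M.E \ C := hIR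
    refine ⟨hIR', ?_⟩
    obtain ⟨hBE, B₀, hB₀, hBB₀⟩ := (Matroid.dual_indep_iff_exists' (M := M)).1 hB.indep
    have hsp : M.E ⊆ M.closure (M.E \ B) := by
      have hB₀sub : B₀ ⊆ M.E \ B := Set.subset_diff.2 ⟨hB₀.subset_ground, hBB₀.symm⟩
      calc M.E = M.closure B₀ := hB₀.closure_eq.symm
        _ ⊆ M.closure (M.E \ B) := M.closure_subset_closure hB₀sub
    have hJEB : J ⊆ M.E \ B := Set.subset_diff.2 ⟨hJ.indep.subset_ground,
      Set.disjoint_left.2 fun a haJ haB => (hB.subset haB).2 (hJ.subset haJ)⟩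
    obtain ⟨K, hK, hJK⟩ := hJ.indep.subset_isBasis_of_subset hJEB Set.diff_subset
    have hKbase : M.IsBase K := hK.indep.isBase_of_ground_subset_closure
      (by rw [hK.closure_eq_closure]; exact hsp)
    have hsub : M.E \ B ⊆ C ∪ K := by
      by_contra hsub
      obtain ⟨z, hz, hzCK⟩ := Set.not_subset.1 hsub
      have hzR : z ∈ M.E \ C := ⟨hz.1, fun h => hzCK (Or.inl h)⟩
      have hzK : z ∉ K := fun h => hzCK (Or.inr h)
      have hBK : Disjoint (insert z B) K := by
        rw [Set.disjoint_left]
        rintro a (rfl | haB)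
        · exact hzK
        · exact fun haK => (hK.subset haK).2 haB
      have hind : M✶.Indep (insert z B) :=
        (Matroid.dual_indep_iff_exists' (M := M)).2
          ⟨Set.insert_subset hzR.1 hBE, ⟨K, hKbase, hBK⟩⟩
      have heq := hB.eq_of_subset_indep hind (Set.subset_insert z B)
        (Set.insert_subset hzR hB.subset)
      exact hz.2 (by rw [heq]; exact Set.mem_insert z B)
    have hIK : I ⊆ K := by
      intro a haI
      have haEB : a ∈ M.E \ B := ⟨(hIR' haI).1, Set.disjoint_left.1 hIB haI⟩
      rcases hsub haEB with h | h
      · exact absurd h (hIR' haI).2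
      · exact h
    exact hKbase.indep.subset (Set.union_subset hIK hJK)
  · rintro ⟨hIR, hIJind⟩
    obtain ⟨B₁, hB₁, hIJB₁⟩ := hIJind.exists_isBase_superset
    refine (Matroid.dual_indep_iff_exists' (M := delete M✶ C)).2
      ⟨hIR, ⟨(M.E \ C) \ B₁, ?_, ?_⟩⟩
    · rw [hbase, Matroid.isBasis_iff hR]
      refine ⟨(Matroid.dual_indep_iff_exists' (M := M)).2
        ⟨Set.diff_subset.trans Set.diff_subset, ⟨B₁, hB₁, Set.disjoint_sdiff_left⟩⟩,
        Set.diff_subset, ?_⟩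
      intro B' hB'ind hBB' hB'R
      obtain ⟨hB'E, B₂, hB₂, hB'B₂⟩ := (Matroid.dual_indep_iff_exists' (M := M)).1 hB'ind
      have hB₂sub : B₂ ⊆ C ∪ (B₁ \ B') := by
        intro a ha
        by_cases haC : a ∈ C
        · exact Or.inl haC
        refine Or.inr ⟨?_, Set.disjoint_right.1 hB'B₂ ha⟩
        by_contra haB₁
        exact (Set.disjoint_right.1 hB'B₂ ha) (hBB' ⟨⟨hB₂.subset_ground ha, haC⟩, haB₁⟩)
      have hJB₁ : J ⊆ B₁ := Set.subset_union_right.trans hIJB₁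
      have hJB₁B' : J ∪ (B₁ \ B') ⊆ B₁ := Set.union_subset hJB₁ Set.diff_subset
      have hspan : M.E ⊆ M.closure (J ∪ (B₁ \ B')) := by
        calc M.E = M.closure B₂ := hB₂.closure_eq.symm
          _ ⊆ M.closure (C ∪ (B₁ \ B')) := M.closure_subset_closure hB₂sub
          _ = M.closure (M.closure C ∪ (B₁ \ B')) :=
              (M.closure_union_closure_left_eq _ _).symm
          _ = M.closure (M.closure J ∪ (B₁ \ B')) := by rw [hJ.closure_eq_closure]
          _ = M.closure (J ∪ (B₁ \ B')) := M.closure_union_closure_left_eq _ _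
      have hbase' : M.IsBase (J ∪ (B₁ \ B')) :=
        (hB₁.indep.subset hJB₁B').isBase_of_ground_subset_closure hspan
      have hBeq : J ∪ (B₁ \ B') = B₁ := hbase'.eq_of_subset_isBase hB₁ hJB₁B'
      apply Set.Subset.antisymm hBB'
      intro a haB'
      refine ⟨hB'R haB', fun haB₁ => ?_⟩
      have : a ∈ J ∪ (B₁ \ B') := by rw [hBeq]; exact haB₁
      rcases this with h | h
      · exact (hB'R haB').2 (hJ.subset h)
      · exact h.2 haB'
    · exact Set.disjoint_left.2 fun a haI h => h.2 (hIJB₁ (Or.inl haI))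

lemma er_contract_add (hC : C ⊆ M.E) (hX : X ⊆ M.E \ C) :
    er (contract M C) X + er M C = er M (X ∪ C) := by
  obtain ⟨J, hJ⟩ := M.exists_isBasis C hC
  obtain ⟨K, hK⟩ := (contract M C).exists_isBasis X (by rw [contract_ground]; exact hX)
  have hKi := (contract_indep_iff hC hJ).1 hK.indep
  have hKJbasis : M.IsBasis (K ∪ J) (X ∪ C) := by
    rw [Matroid.isBasis_iff_indep_closure]
    refine ⟨hKi.2, ?_, Set.union_subset_union hK.subset hJ.subset⟩
    rintro a (haX | haC)
    · by_contra hacl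
      have haE : a ∈ M.E := (hX haX).1
      by_cases haKJ : a ∈ K ∪ J
      · exact hacl (M.mem_closure_of_mem' haKJ haE)
      have hins : M.Indep (insert a (K ∪ J)) :=
        (hKi.2.insert_indep_iff_of_notMem haKJ).2 ⟨haE, hacl⟩
      have haK : a ∉ K := fun h => haKJ (Or.inl h)
      have hins' : (contract M C).Indep (insert a K) :=
        (contract_indep_iff hC hJ).2
          ⟨Set.insert_subset (hX haX) hKi.1, by rwa [Set.insert_union]⟩
      have heq := hK.eq_of_subset_indep hins' (Set.subset_insert a K)
        (Set.insert_subset haX hK.subset)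
      exact haK (by rw [heq]; exact Set.mem_insert a K)
    · exact M.closure_subset_closure Set.subset_union_right (hJ.subset_closure haC)
  have hdisj : Disjoint K J :=
    Set.disjoint_left.2 fun a haK haJ => (hKi.1 haK).2 (hJ.subset haJ)
  rw [hK.er_eq, hJ.er_eq, hKJbasis.er_eq, Set.encard_union_eq hdisj]

end Aux2

section Aux3

variable {M N : Matroid α} {I J X Y C P Q T S : Set α} {e b u v x y : α} {ℓ : ℕ}

lemma rk_def (M : Matroid α) : rk M = (er M M.E).toNat := rfl

lemma point_eq_closure (hP : Point M P) (heP : e ∈ P) (he : M.Indep {e}) :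
    P = M.closure {e} := by
  have heE : e ∈ M.E := hP.1.subset_ground heP
  refine Set.Subset.antisymm ?_ ?_
  · intro z hzP
    by_contra hz
    have hze : z ∉ ({e} : Set α) := by
      intro h
      rw [Set.mem_singleton_iff] at h
      subst h
      exact hz (M.mem_closure_of_mem' rfl heE)
    have hzE : z ∈ M.E := hP.1.subset_ground hzP
    have hzind : M.Indep (insert z {e}) := (he.insert_indep_iff_of_notMem hze).2 ⟨hzE, hz⟩
    have hsub : insert z {e} ⊆ P := by
      rw [Set.insert_subset_iff]; exact ⟨hzP, Set.singleton_subset_iff.2 heP⟩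
    have h2 : (2 : ℕ∞) ≤ er M P := by
      have h := encard_le_er hzind hsub
      rwa [Set.encard_pair (by simpa using hze)] at h
    rw [hP.2] at h2
    norm_num at h2
  · have h := M.closure_subset_closure (Set.singleton_subset_iff.2 heP)
    rwa [hP.1.closure] at h

lemma point_closure_singleton (he : M.Indep {e}) : Point M (M.closure {e}) := by
  have heE : e ∈ M.E := he.subset_ground rfl
  refine ⟨closure_flat' M {e}, le_antisymm ?_ ?_⟩
  · calc er M (M.closure {e}) ≤ er M {e} := er_closure_le (Set.singleton_subset_iff.2 heE)
      _ = 1 := by rw [he.er_eq, Set.encard_singleton]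
  · have h1 : ({e} : Set α).encard ≤ er M (M.closure {e}) :=
      encard_le_er he (M.subset_closure {e} (Set.singleton_subset_iff.2 heE))
    rwa [Set.encard_singleton] at h1

lemma er_restrict_self (M : Matroid α) (S : Set α) : er (M ↾ S) S = er M S := by
  apply le_antisymm
  · exact er_le_iff.2 fun I hI hIS => encard_le_er hI.of_restrict hIS
  · exact er_le_iff.2 fun I hI hIS => encard_le_er (hI.indep_restrict_of_subset hIS) hIS

lemma indep_of_encard_le_two (h1 : ∀ e ∈ T, M.Indep {e})
    (h2 : ∀ e f, e ∈ T → f ∈ T → e ≠ f → M.Indep {e, f})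
    (hIT : I ⊆ T) (hI2 : I.encard ≤ 2) : M.Indep I := by
  by_cases hem : I = ∅
  · rw [hem]; exact M.empty_indep
  obtain ⟨a, ha⟩ := Set.nonempty_iff_ne_empty.2 hem
  by_cases hsing : I = {a}
  · rw [hsing]; exact h1 a (hIT ha)
  have hex : ∃ c ∈ I, c ≠ a := by
    by_contra hv; push_neg at hv
    exact hsing (Set.eq_singleton_iff_unique_mem.2 ⟨ha, hv⟩)
  obtain ⟨c, hc, hca⟩ := hex
  have hsub : ({a, c} : Set α) ⊆ I := by
    rw [Set.insert_subset_iff]; exact ⟨ha, Set.singleton_subset_iff.2 hc⟩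
  have hIfin : I.Finite := by
    rw [← Set.encard_lt_top_iff]
    exact lt_of_le_of_lt hI2 (by exact_mod_cast lt_top_iff_ne_top.2 (by simp))
  have hIeq : ({a, c} : Set α) = I := by
    apply hIfin.eq_of_subset_of_encard_le' hsub
    rw [Set.encard_pair (Ne.symm hca)]
    exact hI2
  rw [← hIeq]
  exact h2 a c (hIT ha) (hIT hc) (Ne.symm hca)

lemma encard_le_of_no_minor (hℓ : 2 ≤ ℓ) (hU : ¬ HasU2Minor M (ℓ + 2))
    (hN : N = contract M C)
    (hT : T ⊆ N.E) (h2 : er N T ≤ 2)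
    (h1 : ∀ e ∈ T, N.Indep {e})
    (hpair : ∀ e f, e ∈ T → f ∈ T → e ≠ f → N.Indep {e, f}) :
    T.encard ≤ ((ℓ + 1 : ℕ) : ℕ∞) := by
  subst hN
  set N := contract M C with hNdef
  by_contra hbig
  push_neg at hbig
  have hge : ((ℓ + 2 : ℕ) : ℕ∞) ≤ T.encard := by
    have h := Order.add_one_le_of_lt hbig
    calc ((ℓ + 2 : ℕ) : ℕ∞) = ((ℓ + 1 : ℕ) : ℕ∞) + 1 := by push_cast; ring
      _ ≤ _ := h
  obtain ⟨S, hST, hScard⟩ := Set.exists_subset_encard_eq hge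
  apply hU
  refine ⟨N ↾ S, ⟨C, N.E \ S, ?_⟩, ?_, ?_, ?_⟩
  · show N ↾ (N.E \ (N.E \ S)) = N ↾ S
    rw [Set.diff_diff_cancel_left (hST.trans hT)]
  · intro I hIE hI2
    rw [Matroid.restrict_indep_iff]
    have hIS : I ⊆ S := hIE
    exact ⟨indep_of_encard_le_two h1 hpair (hIS.trans hST) hI2, hIS⟩
  · show er (N ↾ S) ((N ↾ S).E) = 2
    rw [Matroid.restrict_ground_eq, er_restrict_self]
    apply le_antisymm ((er_mono hST).trans h2)
    have h2le : (1 : ℕ∞) < S.encard := by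
      rw [hScard]
      exact_mod_cast Nat.lt_of_lt_of_le one_lt_two (by omega)
    obtain ⟨a, c, haS, hcS, hac⟩ := Set.one_lt_encard_iff.1 h2le
    have h := encard_le_er (hpair a c (hST haS) (hST hcS) hac)
      (by rw [Set.insert_subset_iff]; exact ⟨haS, Set.singleton_subset_iff.2 hcS⟩)
    rwa [Set.encard_pair hac] at h
  · show ((N ↾ S).E).encard = ((ℓ + 2 : ℕ) : ℕ∞)
    rw [Matroid.restrict_ground_eq, hScard]

end Aux3

section Aux4

variable {M N : Matroid α} {C : Set α} {ℓ : ℕ}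

lemma kung_aux (hℓ : 2 ≤ ℓ) (hfin : M.E.Finite) (hU : ¬ HasU2Minor M (ℓ + 2)) :
    ∀ n : ℕ, ∀ C, C ⊆ M.E → rk (contract M C) ≤ n →
      (ℓ - 1) * eps (contract M C) ≤ ℓ ^ n - 1 := by
  intro n
  induction n with
  | zero =>
    intro C hC hrk
    set N := contract M C with hNdef
    have hNE : N.E = M.E \ C := contract_ground M C
    have hNEfin : N.E.Finite := hNE ▸ hfin.subset Set.diff_subset
    have hE0 : er N N.E = 0 := by
      have hne : er N N.E ≠ ⊤ :=
        ne_top_of_le_ne_top hNEfin.encard_lt_top.ne er_le_encard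
      have h0 : (er N N.E).toNat = 0 := by
        have := Nat.le_zero.1 hrk
        rwa [rk_def] at this
      rcases ENat.toNat_eq_zero.1 h0 with h | h
      · exact h
      · exact absurd h hne
    have hpts : {P | Point N P} = ∅ := by
      ext P
      simp only [Set.mem_setOf_eq, Set.mem_empty_iff_false, iff_false]
      intro hP
      have h := (er_mono (M := N) hP.1.subset_ground).trans hE0.le
      rw [hP.2] at h
      exact absurd h (by norm_num)
    unfold eps
    rw [hpts]
    simp
  | succ n IH =>
    intro C hC hrk
    set N := contract M C with hNdef
    have hNE : N.E = M.E \ C := contract_ground M C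
    have hNEfin : N.E.Finite := hNE ▸ hfin.subset Set.diff_subset
    have hPtsfin : {P | Point N P}.Finite :=
      hNEfin.finite_subsets.subset fun P hP => hP.1.subset_ground
    by_cases h0 : er N N.E = 0
    · have hpts : {P | Point N P} = ∅ := by
        ext P
        simp only [Set.mem_setOf_eq, Set.mem_empty_iff_false, iff_false]
        intro hP
        have h := (er_mono (M := N) hP.1.subset_ground).trans h0.le
        rw [hP.2] at h
        exact absurd h (by norm_num)
      unfold eps
      rw [hpts]
      simp
    · have h1 : 1 ≤ er N N.E := ENat.one_le_iff_ne_zero.2 h0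
      obtain ⟨b, hbE, hb⟩ := exists_indep_singleton_of_one_le_er h1
      have hbM : b ∈ M.E := (hNE ▸ hbE).1
      set N' := contract M (C ∪ {b}) with hN'def
      have hNN' : N' = contract N {b} := (contract_contract M C {b}).symm
      have hN'E : N'.E = N.E \ {b} := by rw [hNN', contract_ground]
      have hN'Efin : N'.E.Finite := hN'E ▸ hNEfin.subset Set.diff_subset
      have hform : ∀ X, X ⊆ N.E \ {b} → er N' X + 1 = er N (X ∪ {b}) := by
        intro X hX
        have h := er_contract_add (M := N) (C := {b}) (Set.singleton_subset_iff.2 hbE) hX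
        rw [hb.er_eq, Set.encard_singleton] at h
        rw [hNN']
        exact h
      have hfinN : er N N.E ≠ ⊤ :=
        ne_top_of_le_ne_top hNEfin.encard_lt_top.ne er_le_encard
      have hrkN' : rk N' ≤ n := by
        have hEe : N'.E ∪ {b} = N.E := by
          rw [hN'E, Set.diff_union_self,
            Set.union_eq_self_of_subset_right (Set.singleton_subset_iff.2 hbE)]
        have h2 := hform N'.E (hN'E ▸ Subset.rfl)
        rw [hEe] at h2
        have h3 : er N N.E ≤ ((n + 1 : ℕ) : ℕ∞) := by
          rw [← ENat.coe_toNat hfinN]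
          exact_mod_cast hrk
        have h4 : er N' N'.E + 1 ≤ ((n : ℕ) : ℕ∞) + 1 := by
          rw [h2]
          calc er N N.E ≤ ((n + 1 : ℕ) : ℕ∞) := h3
            _ = ((n : ℕ) : ℕ∞) + 1 := by push_cast; ring
        have h5 : er N' N'.E ≤ ((n : ℕ) : ℕ∞) :=
          (WithTop.add_le_add_iff_right (by simp : (1 : ℕ∞) ≠ ⊤)).1 h4
        rw [rk_def]
        exact ENat.toNat_le_of_le_coe h5
      have hIH := IH (C ∪ {b}) (Set.union_subset hC (Set.singleton_subset_iff.2 hbM)) hrkN'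
      classical
      -- representative of each point
      have hrepex : ∀ P : Set α, Point N P → ∃ e, e ∈ P ∧ N.Indep {e} := by
        intro P hP
        obtain ⟨e, heP, he⟩ := exists_indep_singleton_of_one_le_er (hP.2.ge)
        exact ⟨e, heP, he⟩
      set rep : Set α → α :=
        fun P => if h : ∃ e, e ∈ P ∧ N.Indep {e} then h.choose else b with hrepdef
      have hrep_mem : ∀ P : Set α, Point N P → rep P ∈ P ∧ N.Indep {rep P} := by
        intro P hP
        have h := hrepex P hP
        simp only [hrepdef, dif_pos h]
        exact h.choose_spec
      have hrep_cl : ∀ P : Set α, Point N P → P = N.closure {rep P} := fun P hP =>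
        point_eq_closure hP (hrep_mem P hP).1 (hrep_mem P hP).2
      set phi : Set α → Set α := fun P => N'.closure P with hphidef
      have hA : ∀ P : Set α, Point N P → b ∉ P → Point N' (phi P) ∧ P ⊆ phi P := by
        intro P hP hbP
        have hPsub : P ⊆ N'.E := by
          rw [hN'E]
          exact Set.subset_diff.2 ⟨hP.1.subset_ground, by simpa using hbP⟩
        have herP : er N' P = 1 := by
          have h2 := hform P (hN'E ▸ hPsub)
          have hub : er N (P ∪ {b}) = 2 := by
            apply le_antisymm
            · rw [Set.union_singleton]
              calc er N (insert b P) ≤ er N P + 1 := er_insert_le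
                _ = 2 := by rw [hP.2, one_add_one_eq_two]
            · have hgP : rep P ∈ P := (hrep_mem P hP).1
              have hgi : N.Indep {rep P} := (hrep_mem P hP).2
              have hbg : b ∉ ({rep P} : Set α) := by
                simp only [Set.mem_singleton_iff]
                intro h
                exact hbP (by rw [h]; exact hgP)
              have hbcl : b ∉ N.closure {rep P} := by
                rw [← hrep_cl P hP]
                exact hbP
              have hpairb : N.Indep (insert b {rep P}) :=
                (hgi.insert_indep_iff_of_notMem hbg).2 ⟨hbE, hbcl⟩
              have hsub2 : insert b {rep P} ⊆ P ∪ {b} := by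
                rw [Set.insert_subset_iff]
                exact ⟨Or.inr rfl, Set.singleton_subset_iff.2 (Or.inl hgP)⟩
              have h := encard_le_er hpairb hsub2
              rwa [Set.encard_pair (by simpa using hbg)] at h
          rw [hub] at h2
          have h3 : er N' P + 1 = 1 + 1 := by rw [h2, one_add_one_eq_two]
          exact WithTop.add_right_cancel (by simp : (1 : ℕ∞) ≠ ⊤) h3
        refine ⟨⟨closure_flat' N' P, ?_⟩, N'.subset_closure P hPsub⟩
        show er N' (N'.closure P) = 1
        rw [er_closure_eq hPsub, herP]
      set A := {P : Set α | Point N P ∧ b ∉ P} with hAdef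
      have hAfin : A.Finite := hPtsfin.subset fun P hP => hP.1
      have hsplit : {P | Point N P} ⊆ insert (N.closure {b}) A := by
        intro P hP
        rw [Set.mem_insert_iff]
        by_cases hbP : b ∈ P
        · exact Or.inl (point_eq_closure hP hbP hb)
        · exact Or.inr ⟨hP, hbP⟩
      have heps1 : eps N ≤ A.ncard + 1 := by
        calc eps N ≤ (insert (N.closure {b}) A).ncard :=
              Set.ncard_le_ncard hsplit (hAfin.insert _)
          _ ≤ A.ncard + 1 := Set.ncard_insert_le _ _
      have htfin : {Q : Set α | Point N' Q}.Finite :=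
        hN'Efin.finite_subsets.subset fun Q hQ => hQ.1.subset_ground
      set sF := hAfin.toFinset with hsFdef
      set tF := htfin.toFinset with htFdef
      have hmaps : ∀ P ∈ sF, phi P ∈ tF := by
        intro P hP
        rw [hsFdef, Set.Finite.mem_toFinset] at hP
        rw [htFdef, Set.Finite.mem_toFinset]
        exact (hA P hP.1 hP.2).1
      have hcard := Finset.card_eq_sum_card_fiberwise hmaps
      have hfib : ∀ Q ∈ tF, (sF.filter fun P => phi P = Q).card ≤ ℓ := by
        intro Q hQ
        rw [htFdef, Set.Finite.mem_toFinset] at hQ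
        set F := sF.filter fun P => phi P = Q with hFdef
        have hFmem : ∀ P ∈ F, Point N P ∧ b ∉ P ∧ phi P = Q := by
          intro P hP
          rw [hFdef, Finset.mem_filter, hsFdef, Set.Finite.mem_toFinset] at hP
          exact ⟨hP.1.1, hP.1.2, hP.2⟩
        have hinj : Set.InjOn rep ↑F := by
          intro P hP P' hP' hrepeq
          rw [Finset.mem_coe] at hP hP'
          rw [hrep_cl P (hFmem P hP).1, hrep_cl P' (hFmem P' hP').1, hrepeq]
        have hcardF : F.card = (F.image rep).card := (Finset.card_image_of_injOn hinj).symm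
        set S0 : Finset α := F.image rep with hS0def
        have hS0mem : ∀ a ∈ S0, ∃ P : Set α,
            Point N P ∧ b ∉ P ∧ phi P = Q ∧ a = rep P := by
          intro a ha
          rw [hS0def, Finset.mem_image] at ha
          obtain ⟨P, hPF, rfl⟩ := ha
          obtain ⟨h1', h2', h3'⟩ := hFmem P hPF
          exact ⟨P, h1', h2', h3', rfl⟩
        have hS0Q : ∀ a ∈ S0, a ∈ Q := by
          intro a ha
          obtain ⟨P, hP, hbP, hphiP, rfl⟩ := hS0mem a ha
          have hPsub : P ⊆ phi P := (hA P hP hbP).2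
          rw [hphiP] at hPsub
          exact hPsub (hrep_mem P hP).1
        have hQN : Q ⊆ N.E \ {b} := by
          rw [← hN'E]
          exact hQ.1.subset_ground
        have hS0card : S0.card ≤ ℓ := by
          by_contra hbig
          push_neg at hbig
          set T0 : Set α := insert b ↑S0 with hT0def
          have hbS0 : b ∉ (↑S0 : Set α) := by
            intro hbmem
            exact (hQN (hS0Q b hbmem)).2 rfl
          have hT0sing : ∀ a ∈ T0, N.Indep {a} := by
            rintro a (rfl | ha)
            · exact hb
            · obtain ⟨P, hP, _, _, rfl⟩ := hS0mem a ha
              exact (hrep_mem P hP).2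
          have hS0props : ∀ a ∈ (↑S0 : Set α), N.Indep {a} ∧ b ∉ N.closure {a} ∧
              ∀ c ∈ (↑S0 : Set α), c ≠ a → c ∉ N.closure {a} := by
            intro a ha
            obtain ⟨P, hP, hbP, hphiP, rfl⟩ := hS0mem a ha
            have hcl : N.closure {rep P} = P := (hrep_cl P hP).symm
            refine ⟨(hrep_mem P hP).2, by rw [hcl]; exact hbP, ?_⟩
            intro c hc hca hccl
            rw [hcl] at hccl
            obtain ⟨P', hP', hbP', hphiP', rfl⟩ := hS0mem c hc
            have hPP' : P = P' := by
              rw [point_eq_closure hP hccl (hrep_mem P' hP').2, ← hrep_cl P' hP']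
            exact hca (by rw [hPP'])
          have hT0pair : ∀ u' v', u' ∈ T0 → v' ∈ T0 → u' ≠ v' → N.Indep {u', v'} := by
            have hkey : ∀ a ∈ (↑S0 : Set α), N.Indep {b, a} := by
              intro a ha
              obtain ⟨hai, hbcl, -⟩ := hS0props a ha
              have hba : b ∉ ({a} : Set α) := by
                simp only [Set.mem_singleton_iff]
                intro h
                exact hbS0 (by rw [h]; exact ha)
              exact (hai.insert_indep_iff_of_notMem hba).2 ⟨hbE, hbcl⟩
            rintro u' v' (rfl | hu) (rfl | hv) huv
            · exact absurd rfl huv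
            · exact hkey v' hv
            · rw [Set.pair_comm]
              exact hkey u' hu
            · obtain ⟨hui, -, hucl⟩ := hS0props u' hu
              have hvE : v' ∈ N.E := (hQN (hS0Q v' hv)).1
              have hvu : v' ∉ ({u'} : Set α) := by simpa using huv.symm
              have hvcl : v' ∉ N.closure {u'} := hucl v' hv huv.symm
              have h := (hui.insert_indep_iff_of_notMem hvu).2 ⟨hvE, hvcl⟩
              rwa [Set.pair_comm]
          have herQ : er N (Q ∪ {b}) = 2 := by
            have h2 := hform Q hQN
            rw [hQ.2, one_add_one_eq_two] at h2
            exact h2.symm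
          have hT0sub : T0 ⊆ Q ∪ {b} := by
            rintro a (rfl | ha)
            · exact Or.inr rfl
            · exact Or.inl (hS0Q a ha)
          have hT0er : er N T0 ≤ 2 := by
            rw [← herQ]
            exact er_mono hT0sub
          have hT0E : T0 ⊆ N.E := by
            rintro a (rfl | ha)
            · exact hbE
            · exact (hQN (hS0Q a ha)).1
          have hT0card : ((ℓ + 2 : ℕ) : ℕ∞) ≤ T0.encard := by
            rw [hT0def, Set.encard_insert_of_notMem hbS0,
              Set.encard_coe_eq_coe_finsetCard]
            have hc1 : (ℓ + 1 : ℕ) ≤ S0.card := hbig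
            calc ((ℓ + 2 : ℕ) : ℕ∞) = ((ℓ + 1 : ℕ) : ℕ∞) + 1 := by push_cast; ring
              _ ≤ (S0.card : ℕ∞) + 1 := by
                  exact add_le_add_left (by exact_mod_cast hc1) 1
          have hcontra := encard_le_of_no_minor hℓ hU hNdef hT0E hT0er hT0sing hT0pair
          have : (ℓ + 2 : ℕ) ≤ (ℓ + 1 : ℕ) := by
            exact_mod_cast hT0card.trans hcontra
          omega
        rw [hcardF]
        exact hS0card
      have hsum : sF.card ≤ tF.card * ℓ := by
        rw [hcard]
        calc ∑ Q ∈ tF, (sF.filter fun P => phi P = Q).card ≤ ∑ _Q ∈ tF, ℓ :=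
              Finset.sum_le_sum hfib
          _ = tF.card * ℓ := by rw [Finset.sum_const, smul_eq_mul]
      have hAcard : A.ncard ≤ ℓ * eps N' := by
        have h1' : A.ncard = sF.card := Set.ncard_eq_toFinset_card A hAfin
        have h2' : eps N' = tF.card := Set.ncard_eq_toFinset_card _ htfin
        rw [h1', h2']
        calc sF.card ≤ tF.card * ℓ := hsum
          _ = ℓ * tF.card := Nat.mul_comm _ _
      have hkeyN : eps N ≤ ℓ * eps N' + 1 := heps1.trans (by omega)
      -- final arithmetic
      obtain ⟨k, rfl⟩ : ∃ k, ℓ = k + 2 := ⟨ℓ - 2, by omega⟩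
      have hl1 : k + 2 - 1 = k + 1 := by omega
      rw [hl1] at hIH ⊢
      have hp1 : 1 ≤ (k + 2) ^ n := Nat.one_le_pow _ _ (by omega)
      obtain ⟨m, hm⟩ : ∃ m, (k + 2) ^ n = m + 1 := ⟨(k + 2) ^ n - 1, by omega⟩
      rw [hm, Nat.add_sub_cancel] at hIH
      apply Nat.le_sub_of_add_le
      calc (k + 1) * eps N + 1 ≤ (k + 1) * ((k + 2) * eps N' + 1) + 1 := by
            exact add_le_add_left (Nat.mul_le_mul_left _ hkeyN) 1
        _ = (k + 2) * ((k + 1) * eps N') + (k + 2) := by ring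
        _ ≤ (k + 2) * m + (k + 2) := by
            exact add_le_add_left (Nat.mul_le_mul_left _ hIH) _
        _ = (k + 2) * (m + 1) := by ring
        _ = (k + 2) ^ (n + 1) := by rw [pow_succ, hm]; ring

end Aux4


end MatroidDHJ

open MatroidDHJ
open scoped Matroid

theorem kung_bound {α : Type*} (ℓ : ℕ) (hℓ : 2 ≤ ℓ) (M : Matroid α)
    (hfin : M.E.Finite) (hs : Simple M) (hU : ¬ HasU2Minor M (ℓ + 2)) :
    (ℓ - 1) * M.E.ncard ≤ ℓ ^ rk M - 1 := by
  have haux := kung_aux hℓ hfin hU (rk M) ∅ (Set.empty_subset _)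
    (by rw [MatroidDHJ.contract_empty])
  rw [MatroidDHJ.contract_empty] at haux
  have hsing : ∀ e ∈ M.E, M.Indep {e} := fun e he =>
    hs {e} (Set.singleton_subset_iff.2 he)
      (by rw [Set.encard_singleton]; exact one_le_two)
  have hPfin : {P | Point M P}.Finite :=
    hfin.finite_subsets.subset fun P hP => hP.1.subset_ground
  have hinj : Set.InjOn (fun e => M.closure {e}) M.E := by
    intro e he f hf hef
    by_contra hne
    have hpair : M.Indep {e, f} := hs {e, f}
      (by rw [Set.insert_subset_iff]; exact ⟨he, Set.singleton_subset_iff.2 hf⟩)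
      (Set.encard_pair hne).le
    have hfP : f ∈ M.closure {e} := by
      simp only at hef
      rw [hef]
      exact M.mem_closure_of_mem' rfl hf
    have hdiff : ({e, f} : Set α) \ {f} = {e} := by
      ext z
      simp only [Set.mem_diff, Set.mem_insert_iff, Set.mem_singleton_iff]
      constructor
      · rintro ⟨h | h, h2⟩
        · exact h
        · exact absurd h h2
      · rintro rfl
        exact ⟨Or.inl rfl, hne⟩
    have hnot := hpair.notMem_closure_diff_of_mem (Set.mem_insert_of_mem e rfl)
    rw [hdiff] at hnot
    exact hnot hfP
  have hcard : M.E.ncard ≤ eps M :=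
    Set.ncard_le_ncard_of_injOn (fun e => M.closure {e})
      (fun e he => point_closure_singleton (hsing e he)) hinj hPfin
  calc (ℓ - 1) * M.E.ncard ≤ (ℓ - 1) * eps M := Nat.mul_le_mul_left _ hcard
    _ ≤ ℓ ^ rk M - 1 := haux
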